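/- Let ℙ be an atomless probability measure and Y ≥ 0 with E^ℙ[Y] > 1, and 𝓟(ℙ,0,Y) = {ℚ ≪ ℙ : dℚ/dℙ ≤ Y}. Then for every A ∈ 𝓕, sup_{ℚ ∈ 𝓟(ℙ,0,Y)} ℚ(A) = min(1, E^ℙ[Y·1_A]). -/

import Mathlib

open Set MeasureTheory

lemma stmt_14_aux {Ω : Type*} [MeasurableSpace Ω] (ℙ : Measure Ω) [IsProbabilityMeasure ℙ]
    (Y f : Ω → ℝ) (hf : Measurable f) (hfnn : ∀ ω, 0 ≤ f ω) (hfY : ∀ ω, f ω ≤ Y ω)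
    (hfint : Integrable f ℙ) (hf1 : ∫ ω, f ω ∂ℙ = 1) (A : Set Ω) (hA : MeasurableSet A) :
    ∃ Q : Measure Ω, (IsProbabilityMeasure Q ∧ Q ≪ ℙ ∧
        (∀ᵐ ω ∂ℙ, (Q.rnDeriv ℙ ω).toReal ≤ Y ω))
      ∧ (Q A).toReal = ∫ ω in A, f ω ∂ℙ := by
  set Q := ℙ.withDensity fun ω => ENNReal.ofReal (f ω) with hQ
  have hmeas : Measurable fun ω => ENNReal.ofReal (f ω) := hf.ennreal_ofReal
  refine ⟨Q, ⟨?_, withDensity_absolutelyContinuous _ _, ?_⟩, ?_⟩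
  · constructor
    rw [hQ, withDensity_apply _ MeasurableSet.univ, Measure.restrict_univ,
      ← ofReal_integral_eq_lintegral_ofReal hfint (ae_of_all _ hfnn), hf1, ENNReal.ofReal_one]
  · filter_upwards [Measure.rnDeriv_withDensity ℙ hmeas] with ω hω
    rw [hω, ENNReal.toReal_ofReal (hfnn ω)]
    exact hfY ω
  · rw [hQ, withDensity_apply _ hA,
      ← ofReal_integral_eq_lintegral_ofReal hfint.restrict (ae_of_all _ hfnn),
      ENNReal.toReal_ofReal (integral_nonneg hfnn)]

/-- Worst-case probability of an event under the likelihood-ratio constraint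
`dQ/dℙ ≤ Y`: `sup_{Q ∈ 𝓟(ℙ,0,Y)} Q(A) = min(1, E^ℙ[Y 1_A])`. -/
theorem stmt_14 {Ω : Type*} [MeasurableSpace Ω] (ℙ : Measure Ω)
    [IsProbabilityMeasure ℙ] [NullSingletonClass ℙ]
    (Y : Ω → ℝ) (hYmeas : Measurable Y) (hYpos : ∀ ω, 0 ≤ Y ω)
    (hYint : Integrable Y ℙ) (hEY : 1 < ∫ ω, Y ω ∂ℙ)
    (A : Set Ω) (hA : MeasurableSet A) :
    (⨆ Q ∈ {Q : Measure Ω | IsProbabilityMeasure Q ∧ Q ≪ ℙ ∧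
        ∀ᵐ ω ∂ℙ, (Q.rnDeriv ℙ ω).toReal ≤ Y ω},
      (Q A).toReal) = min 1 (∫ ω in A, Y ω ∂ℙ) := by
  set I := ∫ ω in A, Y ω ∂ℙ with hIdef
  have hsplit : (∫ ω in A, Y ω ∂ℙ) + ∫ ω in Aᶜ, Y ω ∂ℙ = ∫ ω, Y ω ∂ℙ :=
    integral_add_compl hA hYint
  -- construct a measure attaining the bound
  obtain ⟨Q, hQmem, hQval⟩ : ∃ Q : Measure Ω, (IsProbabilityMeasure Q ∧ Q ≪ ℙ ∧
      (∀ᵐ ω ∂ℙ, (Q.rnDeriv ℙ ω).toReal ≤ Y ω)) ∧ (Q A).toReal = min 1 I := by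
    rcases le_or_gt 1 I with h1 | h1
    · -- density I⁻¹ • Y on A
      have hI0 : I ≠ 0 := by linarith
      set f : Ω → ℝ := A.indicator (fun ω => I⁻¹ * Y ω) with hfdef
      have hfnn : ∀ ω, 0 ≤ f ω := fun ω =>
        Set.indicator_nonneg (fun ω _ => mul_nonneg (inv_nonneg.2 (by linarith)) (hYpos ω)) ω
      have hfY : ∀ ω, f ω ≤ Y ω := by
        intro ω
        by_cases hω : ω ∈ A
        · rw [hfdef, Set.indicator_of_mem hω]
          exact mul_le_of_le_one_left (hYpos ω) (inv_le_one_of_one_le₀ h1)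
        · rw [hfdef, Set.indicator_of_notMem hω]; exact hYpos ω
      have hfint : Integrable f ℙ := (hYint.const_mul I⁻¹).indicator hA
      have hIA : ∫ ω in A, f ω ∂ℙ = 1 := by
        rw [hfdef, setIntegral_indicator hA, Set.inter_self, integral_const_mul I⁻¹,
          ← hIdef, inv_mul_cancel₀ hI0]
      have hf1 : ∫ ω, f ω ∂ℙ = 1 := by
        rw [hfdef, integral_indicator hA]
        rw [hfdef, setIntegral_indicator hA, Set.inter_self] at hIA
        exact hIA
      obtain ⟨Q, hm, hv⟩ := stmt_14_aux ℙ Y f ((hYmeas.const_mul _).indicator hA)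
        hfnn hfY hfint hf1 A hA
      exact ⟨Q, hm, by rw [hv, hIA, min_eq_left h1]⟩
    · -- density Y on A, c • Y on Aᶜ
      set J := ∫ ω in Aᶜ, Y ω ∂ℙ with hJdef
      have hJ : 1 - I < J := by linarith
      have hJ0 : 0 < J := by linarith
      set c : ℝ := (1 - I) / J with hcdef
      have hc0 : 0 ≤ c := div_nonneg (by linarith) hJ0.le
      have hc1 : c ≤ 1 := by
        rw [hcdef, div_le_one hJ0]; linarith
      set f : Ω → ℝ := fun ω => A.indicator Y ω + Aᶜ.indicator (fun ω => c * Y ω) ω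
        with hfdef
      have hfmeas : Measurable f :=
        (hYmeas.indicator hA).add ((hYmeas.const_mul c).indicator hA.compl)
      have hfnn : ∀ ω, 0 ≤ f ω := fun ω => add_nonneg
        (Set.indicator_nonneg (fun ω _ => hYpos ω) ω)
        (Set.indicator_nonneg (fun ω _ => mul_nonneg hc0 (hYpos ω)) ω)
      have hfY : ∀ ω, f ω ≤ Y ω := by
        intro ω
        by_cases hω : ω ∈ A
        · rw [hfdef]
          simp only [Set.indicator_of_mem hω,
            Set.indicator_of_notMem (by simpa using hω : ω ∉ Aᶜ), add_zero, le_refl]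
        · rw [hfdef]
          simp only [Set.indicator_of_notMem hω,
            Set.indicator_of_mem (by simpa using hω : ω ∈ Aᶜ), zero_add]
          exact mul_le_of_le_one_left (hYpos ω) hc1
      have hfint : Integrable f ℙ :=
        (hYint.indicator hA).add ((hYint.const_mul c).indicator hA.compl)
      have hf1 : ∫ ω, f ω ∂ℙ = 1 := by
        rw [hfdef, integral_add (hYint.indicator hA) ((hYint.const_mul c).indicator hA.compl),
          integral_indicator hA, integral_indicator hA.compl, integral_const_mul,
          ← hIdef, ← hJdef, hcdef, div_mul_cancel₀ _ (ne_of_gt hJ0)]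
        ring
      have hIA : ∫ ω in A, f ω ∂ℙ = I := by
        rw [hfdef, integral_add (hYint.indicator hA).restrict
          ((hYint.const_mul c).indicator hA.compl).restrict,
          setIntegral_indicator hA, setIntegral_indicator hA.compl, Set.inter_self,
          Set.inter_compl_self, setIntegral_empty, add_zero, hIdef]
      obtain ⟨Q, hm, hv⟩ := stmt_14_aux ℙ Y f hfmeas hfnn hfY hfint hf1 A hA
      exact ⟨Q, hm, by rw [hv, hIA, min_eq_right h1.le]⟩
  have hI0' : 0 ≤ I := by
    rcases hQmem with ⟨hQprob, hQac, hQle⟩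
    haveI := hQprob
    calc (0:ℝ) ≤ (Q A).toReal := ENNReal.toReal_nonneg
      _ = min 1 I := hQval
      _ ≤ I := min_le_right _ _
  have hbound : ∀ Q' : Measure Ω, Q' ∈ {Q : Measure Ω | IsProbabilityMeasure Q ∧ Q ≪ ℙ ∧
      ∀ᵐ ω ∂ℙ, (Q.rnDeriv ℙ ω).toReal ≤ Y ω} → (Q' A).toReal ≤ min 1 I := by
    intro Q' hQ'
    obtain ⟨hQprob, hQac, hQle⟩ := hQ'
    haveI := hQprob
    refine le_min ?_ ?_
    · calc (Q' A).toReal ≤ (Q' Set.univ).toReal :=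
            ENNReal.toReal_mono (measure_ne_top _ _) (measure_mono (Set.subset_univ _))
        _ = 1 := by rw [measure_univ, ENNReal.toReal_one]
    · rw [← measureReal_def, ← Measure.setIntegral_toReal_rnDeriv hQac A]
      exact integral_mono_ae (Measure.integrable_toReal_rnDeriv.restrict)
        hYint.restrict (ae_restrict_of_ae hQle)
  have hmin0 : (0:ℝ) ≤ min 1 I := le_min zero_le_one hI0'
  refine le_antisymm ?_ ?_
  · refine Real.iSup_le (fun Q' => Real.iSup_le (fun hQ' => hbound Q' hQ') hmin0) hmin0
  · have hbdd : BddAbove (Set.range fun Q' : Measure Ω =>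
        ⨆ _ : Q' ∈ {Q : Measure Ω | IsProbabilityMeasure Q ∧ Q ≪ ℙ ∧
          ∀ᵐ ω ∂ℙ, (Q.rnDeriv ℙ ω).toReal ≤ Y ω}, (Q' A).toReal) := by
      refine ⟨min 1 I, ?_⟩
      rintro x ⟨Q', rfl⟩
      exact Real.iSup_le (fun hQ' => hbound Q' hQ') hmin0
    refine le_trans ?_ (le_ciSup hbdd Q)
    exact hQval.ge.trans
      (le_ciSup (f := fun _ : Q ∈ {Q : Measure Ω | IsProbabilityMeasure Q ∧ Q ≪ ℙ ∧
          ∀ᵐ ω ∂ℙ, (Q.rnDeriv ℙ ω).toReal ≤ Y ω} => (Q A).toReal)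
        ⟨(Q A).toReal, by rintro x ⟨h, rfl⟩; exact le_rfl⟩ hQmem)
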